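/- arXiv:math/0409076 — 3 statements merged into one kernel-verified Lean document; each statement's English description precedes it below -/
import Mathlib

section
/- (Symmetry of the unperturbed invariant measure.) When k_+ = k_− = 0 (so M = N), the invariant measure is symmetric about N/2: g(ℓ) = g(N−ℓ), and hence π(ℓ) = π(N−ℓ), for every integer ℓ with 0 ≤ ℓ ≤ N. -/
open Finset

/-- Binomial coefficient `C(n,k)` for integers, with `C(n,k) = 0` if `k < 0` or `k > n`. -/
noncomputable def ch (n k : ℤ) : ℝ :=
  if 0 ≤ k ∧ k ≤ n then (n.toNat).choose k.toNat else 0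

/-- `c(i) = ⌈α·|i/N − 1/2|⌉`. -/
noncomputable def cc (N : ℕ) (α : ℝ) (i : ℤ) : ℤ :=
  ⌈α * |(i : ℝ) / (N : ℝ) - 1 / 2|⌉

/-- `f₊(i,j) = C(i−1,j)·C(N−i,2d−j)/C(N−1,2d)`. -/
noncomputable def fplus (N d : ℕ) (i j : ℤ) : ℝ :=
  ch (i - 1) j * ch ((N : ℤ) - i) (2 * (d : ℤ) - j) / ch ((N : ℤ) - 1) (2 * (d : ℤ))

/-- `f₋(i,j) = C(i,j)·C(N−i−1,2d−j)/C(N−1,2d)`. -/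
noncomputable def fminus (N d : ℕ) (i j : ℤ) : ℝ :=
  ch i j * ch ((N : ℤ) - i - 1) (2 * (d : ℤ) - j) / ch ((N : ℤ) - 1) (2 * (d : ℤ))

/-- `P₊₊(i)`: frozen-phase non-flip probability of a `+1` spin when `N⁺ = i`. -/
noncomputable def Ppp (N d : ℕ) (α : ℝ) (i : ℤ) : ℝ :=
  if (N : ℝ) * (1 / 2 - (d : ℝ) / α) ≤ (i : ℝ) ∧ (i : ℝ) ≤ (N : ℝ) * (1 / 2 + (d : ℝ) / α) then
    ∑ j ∈ Finset.Icc (max ((d : ℤ) + cc N α i) (i + 2 * (d : ℤ) - (N : ℤ)))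
        (min (2 * (d : ℤ)) i), fplus N d i j
  else 0

/-- `P₋₋(i)`: frozen-phase non-flip probability of a `−1` spin when `N⁺ = i`. -/
noncomputable def Pmm (N d : ℕ) (α : ℝ) (i : ℤ) : ℝ :=
  if (N : ℝ) * (1 / 2 - (d : ℝ) / α) ≤ (i : ℝ) ∧ (i : ℝ) ≤ (N : ℝ) * (1 / 2 + (d : ℝ) / α) then
    ∑ j ∈ Finset.Icc (max 0 (i + 2 * (d : ℤ) - (N : ℤ)))
        (min ((d : ℤ) - cc N α i) i), fminus N d i j
  else 0

/-- `g(ℓ) = C(M,ℓ)·Π_{j=0}^{ℓ−1} (1 − P₋₋(k₊+j))/(1 − P₊₊(k₊+j+1))`, with `g(0) = 1`. -/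
noncomputable def g (N d : ℕ) (α : ℝ) (kp M : ℕ) (ℓ : ℕ) : ℝ :=
  (M.choose ℓ : ℝ) * ∏ j ∈ Finset.range ℓ,
    (1 - Pmm N d α ((kp + j : ℕ) : ℤ)) / (1 - Ppp N d α ((kp + j + 1 : ℕ) : ℤ))

/-- `Z = Σ_{ℓ=1}^{M} g(ℓ)`. -/
noncomputable def Zc (N d : ℕ) (α : ℝ) (kp M : ℕ) : ℝ :=
  ∑ ℓ ∈ Finset.Icc 1 M, g N d α kp M ℓ

/-- The stationary probabilities `π(ℓ) = g(ℓ)/(1+Z)`. -/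
noncomputable def pii (N d : ℕ) (α : ℝ) (kp M : ℕ) (ℓ : ℕ) : ℝ :=
  g N d α kp M ℓ / (1 + Zc N d α kp M)

/-- `Q(ℓ,ℓ+1) = ((M−ℓ)/N)·(1 − P₋₋(k₊+ℓ))` (equal to `0` when `ℓ ≥ M`). -/
noncomputable def Qup (N d : ℕ) (α : ℝ) (kp M : ℕ) (ℓ : ℕ) : ℝ :=
  (((M : ℝ) - (ℓ : ℝ)) / (N : ℝ)) * (1 - Pmm N d α ((kp + ℓ : ℕ) : ℤ))

/-- `Q(ℓ,ℓ−1) = (ℓ/N)·(1 − P₊₊(k₊+ℓ))` (equal to `0` when `ℓ = 0`). -/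
noncomputable def Qdown (N d : ℕ) (α : ℝ) (kp M : ℕ) (ℓ : ℕ) : ℝ :=
  ((ℓ : ℝ) / (N : ℝ)) * (1 - Ppp N d α ((kp + ℓ : ℕ) : ℤ))

/-- The frozen-phase transition matrix `Q` on `{0,…,M}`. -/
noncomputable def Q (N d : ℕ) (α : ℝ) (kp M : ℕ) (ℓ m : ℕ) : ℝ :=
  if m = ℓ + 1 then Qup N d α kp M ℓ
  else if m + 1 = ℓ then Qdown N d α kp M ℓ
  else if m = ℓ then 1 - Qup N d α kp M ℓ - Qdown N d α kp M ℓ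
  else 0

lemma cc_symm (N : ℕ) (hN : 0 < N) (α : ℝ) (i : ℤ) :
    cc N α ((N : ℤ) - i) = cc N α i := by
  have hNR : (N : ℝ) ≠ 0 := by positivity
  unfold cc
  congr 1
  have h : (((N : ℤ) - i : ℤ) : ℝ) / (N : ℝ) - 1 / 2 = -((i : ℝ) / (N : ℝ) - 1 / 2) := by
    push_cast
    field_simp
    ring
  rw [h, abs_neg]

lemma Pmm_symm (N d : ℕ) (hN : 0 < N) (α : ℝ) (i : ℤ) :
    Pmm N d α i = Ppp N d α ((N : ℤ) - i) := by
  have hNR : (0 : ℝ) < N := by exact_mod_cast hN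
  unfold Pmm Ppp
  have hc : ((N : ℝ) * (1 / 2 - (d : ℝ) / α) ≤ (i : ℝ) ∧ (i : ℝ) ≤ (N : ℝ) * (1 / 2 + (d : ℝ) / α)) ↔
      ((N : ℝ) * (1 / 2 - (d : ℝ) / α) ≤ (((N : ℤ) - i : ℤ) : ℝ) ∧
        (((N : ℤ) - i : ℤ) : ℝ) ≤ (N : ℝ) * (1 / 2 + (d : ℝ) / α)) := by
    push_cast
    constructor <;> rintro ⟨h1, h2⟩ <;> constructor <;> nlinarith
  by_cases h : (N : ℝ) * (1 / 2 - (d : ℝ) / α) ≤ (i : ℝ) ∧ (i : ℝ) ≤ (N : ℝ) * (1 / 2 + (d : ℝ) / α)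
  · rw [if_pos h, if_pos (hc.mp h), cc_symm N hN α i]
    refine Finset.sum_nbij' (fun j => 2 * (d : ℤ) - j) (fun j => 2 * (d : ℤ) - j)
      ?_ ?_ ?_ ?_ ?_
    · intro a ha
      simp only [Finset.mem_Icc] at ha ⊢
      omega
    · intro a ha
      simp only [Finset.mem_Icc] at ha ⊢
      omega
    · intro a _; ring
    · intro a _; ring
    · intro a _
      unfold fminus fplus
      rw [show (N : ℤ) - ((N : ℤ) - i) = i from by ring,
        show 2 * (d : ℤ) - (2 * (d : ℤ) - a) = a from by ring]
      ring
  · rw [if_neg h, if_neg (fun hh => h (hc.mpr hh))]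

/-- The ratio in the product defining `g`. -/
noncomputable def rr (N d : ℕ) (α : ℝ) (j : ℕ) : ℝ :=
  (1 - Pmm N d α (j : ℤ)) / (1 - Ppp N d α ((j : ℤ) + 1))

lemma g_eq_rr (N d : ℕ) (α : ℝ) (ℓ : ℕ) :
    g N d α 0 N ℓ = (N.choose ℓ : ℝ) * ∏ j ∈ Finset.range ℓ, rr N d α j := by
  unfold g rr
  congr 1
  refine Finset.prod_congr rfl fun j _ => ?_
  norm_num

section aux
variable (N d : ℕ) (hN : 0 < N) (α : ℝ)
  (hPpp : ∀ i : ℕ, 1 ≤ i → i ≤ N → Ppp N d α (i : ℤ) < 1)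

include hN hPpp

lemma rr_pos : ∀ j : ℕ, j < N → 0 < rr N d α j := by
  intro j hj
  unfold rr
  have h1 : Pmm N d α (j : ℤ) = Ppp N d α (((N - j : ℕ) : ℤ)) := by
    rw [Pmm_symm N d hN α (j : ℤ)]
    congr 1
    push_cast [Nat.cast_sub hj.le]
    ring
  have h2 : Ppp N d α (((N - j : ℕ) : ℤ)) < 1 := hPpp (N - j) (by omega) (by omega)
  have h3 : Ppp N d α ((j : ℤ) + 1) < 1 := by
    have := hPpp (j + 1) (by omega) (by omega)
    push_cast at this
    exact this
  rw [h1]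
  apply div_pos <;> linarith

lemma rr_reflect : ∀ j : ℕ, j < N → rr N d α (N - 1 - j) = (rr N d α j)⁻¹ := by
  intro j hj
  unfold rr
  have h1 : Pmm N d α ((N - 1 - j : ℕ) : ℤ) = Ppp N d α ((j : ℤ) + 1) := by
    rw [Pmm_symm N d hN α]
    congr 1
    have : ((N - 1 - j : ℕ) : ℤ) = (N : ℤ) - 1 - j := by omega
    rw [this]; ring
  have h2 : Ppp N d α (((N - 1 - j : ℕ) : ℤ) + 1) = Pmm N d α (j : ℤ) := by
    rw [Pmm_symm N d hN α (j : ℤ)]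
    congr 1
    omega
  rw [h1, h2, inv_div]

lemma prodrr_all : ∏ j ∈ Finset.range N, rr N d α j = 1 := by
  set P := ∏ j ∈ Finset.range N, rr N d α j with hP
  have hpos : 0 < P := Finset.prod_pos fun j hj =>
    rr_pos N d hN α hPpp j (Finset.mem_range.mp hj)
  have hrefl : P = P⁻¹ := by
    conv_lhs => rw [hP, ← Finset.prod_range_reflect]
    rw [Finset.prod_congr rfl fun j hj =>
      rr_reflect N d hN α hPpp j (Finset.mem_range.mp hj)]
    rw [← Finset.prod_inv_distrib]
  have : P * P = 1 := by
    nth_rewrite 2 [hrefl]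
    field_simp
  nlinarith

lemma prodrr_symm : ∀ ℓ : ℕ, ℓ ≤ N →
    ∏ j ∈ Finset.range (N - ℓ), rr N d α j = ∏ j ∈ Finset.range ℓ, rr N d α j := by
  intro ℓ hℓ
  have hall : (∏ j ∈ Finset.range (N - ℓ), rr N d α j) *
      ∏ j ∈ Finset.range ℓ, rr N d α (N - ℓ + j) = 1 := by
    rw [← Finset.prod_range_add, show N - ℓ + ℓ = N from by omega]
    exact prodrr_all N d hN α hPpp
  have h2 : ∏ j ∈ Finset.range ℓ, rr N d α (N - ℓ + j)
      = (∏ j ∈ Finset.range ℓ, rr N d α j)⁻¹ := by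
    rw [← Finset.prod_inv_distrib, ← Finset.prod_range_reflect]
    refine Finset.prod_congr rfl fun j hj => ?_
    have hjℓ : j < ℓ := Finset.mem_range.mp hj
    rw [show N - ℓ + (ℓ - 1 - j) = N - 1 - j from by omega,
      rr_reflect N d hN α hPpp j (by omega)]
  rw [h2] at hall
  have hpos : 0 < ∏ j ∈ Finset.range ℓ, rr N d α j :=
    Finset.prod_pos fun j hj => rr_pos N d hN α hPpp j (by
      have := Finset.mem_range.mp hj; omega)
  field_simp at hall
  linarith [hall]

end aux

/-- Symmetry of the unperturbed (`k₊ = k₋ = 0`, `M = N`) invariant measure about `N/2`: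
`g(ℓ) = g(N−ℓ)` and `π(ℓ) = π(N−ℓ)` for `0 ≤ ℓ ≤ N`. -/
theorem stmt7 (N d : ℕ) (hd : 1 ≤ d) (hN : 2 * d < N) (α : ℝ) (hα : 0 < α)
    (hPpp : ∀ i : ℕ, 1 ≤ i → i ≤ N → Ppp N d α (i : ℤ) < 1) :
    ∀ ℓ : ℕ, ℓ ≤ N →
      g N d α 0 N ℓ = g N d α 0 N (N - ℓ) ∧
      pii N d α 0 N ℓ = pii N d α 0 N (N - ℓ) := by
  have hN0 : 0 < N := by omega
  intro ℓ hℓ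
  have hg : g N d α 0 N ℓ = g N d α 0 N (N - ℓ) := by
    rw [g_eq_rr, g_eq_rr, Nat.choose_symm hℓ,
      prodrr_symm N d hN0 α hPpp ℓ hℓ]
  exact ⟨hg, by unfold pii; rw [hg]⟩
end

section
/- (Mean number of +1 spins under the unperturbed invariant measure.) When k_+ = k_− = 0, the mean of the invariant measure is N/2: Σ_{ℓ=0}^{N} ℓ·π(ℓ) = N/2. -/
open Finset

section auxlemmas

lemma ch_nonneg (n k : ℤ) : 0 ≤ ch n k := by
  unfold ch; split <;> positivity

lemma ch_natCast (a b : ℕ) : ch (a : ℤ) (b : ℤ) = (a.choose b : ℝ) := by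
  unfold ch
  split_ifs with h
  · simp
  · push_neg at h
    have hab : a < b := by omega
    rw [Nat.choose_eq_zero_of_lt hab, Nat.cast_zero]

lemma sum_Icc_int (m : ℕ) (F : ℤ → ℝ) :
    ∑ j ∈ Finset.Icc (0:ℤ) (m:ℤ), F j = ∑ j ∈ Finset.range (m+1), F (j:ℤ) := by
  refine Finset.sum_nbij' (fun j => j.toNat) (fun j => (j:ℤ)) ?_ ?_ ?_ ?_ ?_ <;>
      simp only [Finset.mem_Icc, Finset.mem_range] <;> intro a ha
  · omega
  · omega
  · omega
  · omega
  · rw [Int.toNat_of_nonneg ha.1]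

lemma vand (m n k : ℕ) :
    ∑ j ∈ Finset.range (k+1), (m.choose j : ℝ) * (n.choose (k - j) : ℝ)
      = ((m+n).choose k : ℝ) := by
  rw [Nat.add_choose_eq, Finset.Nat.sum_antidiagonal_eq_sum_range_succ_mk]
  push_cast
  rfl

lemma cc_nonneg {α : ℝ} (hα : 0 < α) (N : ℕ) (i : ℤ) : 0 ≤ cc N α i := by
  unfold cc
  exact Int.ceil_nonneg (by positivity)

lemma ch_denom (N d : ℕ) (hN : 2*d < N) :
    ch ((N:ℤ) - 1) (2*(d:ℤ)) = (((N-1).choose (2*d) : ℕ) : ℝ) := by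
  have h1 : ((N:ℤ) - 1) = ((N-1 : ℕ) : ℤ) := by omega
  have h2 : (2*(d:ℤ)) = ((2*d : ℕ) : ℤ) := by omega
  rw [h1, h2, ch_natCast]

lemma ch_denom_pos (N d : ℕ) (hN : 2*d < N) :
    0 < ch ((N:ℤ) - 1) (2*(d:ℤ)) := by
  rw [ch_denom N d hN]
  have : 0 < (N-1).choose (2*d) := Nat.choose_pos (by omega)
  exact_mod_cast this

lemma sum_fminus_le (N d : ℕ) (hN : 2*d < N) (i : ℤ) :
    ∑ j ∈ Finset.Icc (0:ℤ) (2*(d:ℤ)), fminus N d i j ≤ 1 := by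
  have hD := ch_denom_pos N d hN
  unfold fminus
  rw [← Finset.sum_div]
  by_cases hi : 0 ≤ i ∧ i ≤ (N:ℤ) - 1
  · -- exact Vandermonde
    set a : ℕ := i.toNat with ha
    set b : ℕ := N - 1 - a with hb
    have hia : i = (a:ℤ) := by omega
    have hab : a + b = N - 1 := by omega
    have h2d : (2*(d:ℤ)) = ((2*d : ℕ) : ℤ) := by omega
    have hkey : ∑ j ∈ Finset.Icc (0:ℤ) (2*(d:ℤ)),
        ch i j * ch ((N:ℤ) - i - 1) (2*(d:ℤ) - j) = ch ((N:ℤ) - 1) (2*(d:ℤ)) := by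
      rw [h2d, sum_Icc_int]
      have hterm : ∀ j ∈ Finset.range (2*d+1),
          ch i (j:ℤ) * ch ((N:ℤ) - i - 1) (((2*d : ℕ):ℤ) - (j:ℤ))
            = (a.choose j : ℝ) * (b.choose (2*d - j) : ℝ) := by
        intro j hj
        simp only [Finset.mem_range] at hj
        have e1 : ((N:ℤ) - i - 1) = ((b : ℕ) : ℤ) := by omega
        have e2 : (((2*d : ℕ):ℤ) - (j:ℤ)) = ((2*d - j : ℕ) : ℤ) := by omega
        rw [e1, e2, hia, ch_natCast, ch_natCast]
      rw [Finset.sum_congr rfl hterm, vand, hab, ← h2d, ch_denom N d hN]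
    rw [hkey, div_self (ne_of_gt hD)]
  · -- all terms vanish
    have hz : ∀ j ∈ Finset.Icc (0:ℤ) (2*(d:ℤ)),
        ch i j * ch ((N:ℤ) - i - 1) (2*(d:ℤ) - j) = 0 := by
      intro j hj
      simp only [Finset.mem_Icc] at hj
      rcases not_and_or.mp hi with h | h
      · push_neg at h
        have : ch i j = 0 := by unfold ch; rw [if_neg]; omega
        rw [this, zero_mul]
      · push_neg at h
        have : ch ((N:ℤ) - i - 1) (2*(d:ℤ) - j) = 0 := by
          unfold ch; rw [if_neg]; omega
        rw [this, mul_zero]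
    rw [Finset.sum_eq_zero hz, zero_div]
    norm_num

lemma fminus_nonneg (N d : ℕ) (i j : ℤ) : 0 ≤ fminus N d i j := by
  unfold fminus
  exact div_nonneg (mul_nonneg (ch_nonneg _ _) (ch_nonneg _ _)) (ch_nonneg _ _)

lemma Pmm_le_one (N d : ℕ) (hN : 2*d < N) {α : ℝ} (hα : 0 < α) (i : ℤ) :
    Pmm N d α i ≤ 1 := by
  unfold Pmm
  split
  · calc ∑ j ∈ Finset.Icc (max 0 (i + 2 * (d:ℤ) - (N:ℤ)))
          (min ((d:ℤ) - cc N α i) i), fminus N d i j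
        ≤ ∑ j ∈ Finset.Icc (0:ℤ) (2*(d:ℤ)), fminus N d i j := by
          apply Finset.sum_le_sum_of_subset_of_nonneg
          · apply Finset.Icc_subset_Icc
            · exact le_max_left _ _
            · have := cc_nonneg hα N i
              omega
          · intro j _ _
            exact fminus_nonneg N d i j
      _ ≤ 1 := sum_fminus_le N d hN i
  · norm_num

lemma cc_refl (N : ℕ) (hN : 0 < N) (α : ℝ) (i : ℤ) :
    cc N α ((N:ℤ) - i) = cc N α i := by
  unfold cc
  congr 2
  have hN' : (N:ℝ) ≠ 0 := Nat.cast_ne_zero.mpr hN.ne'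
  have : ((((N:ℤ) - i : ℤ)):ℝ) / (N:ℝ) - 1/2 = -((i:ℝ)/(N:ℝ) - 1/2) := by
    push_cast
    field_simp
    ring
  rw [this, abs_neg]

lemma Pmm_eq_Ppp (N d : ℕ) (hN : 2*d < N) {α : ℝ} (hα : 0 < α) (i : ℤ) :
    Pmm N d α i = Ppp N d α ((N:ℤ) - i) := by
  have hN0 : 0 < N := by omega
  unfold Pmm Ppp
  have hsum : (N:ℝ) * (1/2 - (d:ℝ)/α) + (N:ℝ) * (1/2 + (d:ℝ)/α) = N := by ring
  have hcast : ((((N:ℤ) - i : ℤ)):ℝ) = (N:ℝ) - (i:ℝ) := by push_cast; ring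
  split_ifs with h1 h2 h2
  · -- both conditions hold : reindex the sum
    rw [cc_refl N hN0 α i]
    refine Finset.sum_nbij' (fun j => 2*(d:ℤ) - j) (fun j => 2*(d:ℤ) - j) ?_ ?_ ?_ ?_ ?_ <;>
        simp only [Finset.mem_Icc, le_max_iff, max_le_iff, le_min_iff, min_le_iff] <;>
        intro a ha
    · omega
    · omega
    · omega
    · omega
    · unfold fminus fplus
      have e1 : (N:ℤ) - i - 1 = ((N:ℤ) - i) - 1 := by ring
      have e2 : (N:ℤ) - ((N:ℤ) - i) = i := by ring
      have e3 : 2*(d:ℤ) - (2*(d:ℤ) - a) = a := by ring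
      rw [e2, e3]
      ring
  · exfalso
    rw [hcast] at h2
    push_neg at h2
    rcases h1 with ⟨h1a, h1b⟩
    rcases lt_or_ge ((N:ℝ) - (i:ℝ)) ((N:ℝ) * (1/2 - (d:ℝ)/α)) with h | h
    · linarith
    · have := h2 h
      linarith
  · exfalso
    rw [hcast] at h2
    push_neg at h1
    rcases h2 with ⟨h2a, h2b⟩
    rcases lt_or_ge (i:ℝ) ((N:ℝ) * (1/2 - (d:ℝ)/α)) with h | h
    · linarith
    · have := h1 h
      linarith
  · rfl

end auxlemmas

/-- Mean number of `+1` spins under the unperturbed invariant measure: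
`Σ_{ℓ=0}^{N} ℓ·π(ℓ) = N/2`. -/
theorem stmt8 (N d : ℕ) (hd : 1 ≤ d) (hN : 2 * d < N) (α : ℝ) (hα : 0 < α)
    (hPpp : ∀ i : ℕ, 1 ≤ i → i ≤ N → Ppp N d α (i : ℤ) < 1) :
    ∑ ℓ ∈ Finset.range (N + 1), (ℓ : ℝ) * pii N d α 0 N ℓ = (N : ℝ) / 2 := by
  have hN0 : 0 < N := by omega
  set bb : ℕ → ℝ := fun k => 1 - Ppp N d α (k:ℤ) with hbb
  have hbbpos : ∀ k : ℕ, 1 ≤ k → k ≤ N → 0 < bb k := by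
    intro k h1 h2
    have := hPpp k h1 h2
    simp only [hbb]
    linarith
  have hPmm_bb : ∀ j : ℕ, j ≤ N → 1 - Pmm N d α (j:ℤ) = bb (N - j) := by
    intro j hj
    have : Pmm N d α (j:ℤ) = Ppp N d α ((N:ℤ) - j) := Pmm_eq_Ppp N d hN hα _
    have hc : ((N:ℤ) - (j:ℤ)) = ((N - j : ℕ) : ℤ) := by omega
    simp only [hbb, this, hc]
  -- B ℓ = ∏_{j<ℓ} bb (j+1)
  set B : ℕ → ℝ := fun ℓ => ∏ j ∈ Finset.range ℓ, bb (j+1) with hB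
  have hBpos : ∀ ℓ, ℓ ≤ N → 0 < B ℓ := by
    intro ℓ hℓ
    apply Finset.prod_pos
    intro j hj
    simp only [Finset.mem_range] at hj
    exact hbbpos (j+1) (by omega) (by omega)
  -- g in terms of bb and B
  have hg_eq : ∀ ℓ, ℓ ≤ N → g N d α 0 N ℓ =
      (N.choose ℓ : ℝ) * ((∏ j ∈ Finset.range ℓ, bb (N - j)) / B ℓ) := by
    intro ℓ hℓ
    unfold g
    rw [← Finset.prod_div_distrib]
    congr 1
    apply Finset.prod_congr rfl
    intro j hj
    simp only [Finset.mem_range] at hj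
    have e0 : ((0 + j : ℕ) : ℤ) = (j : ℤ) := by omega
    have e1 : ((0 + j + 1 : ℕ) : ℤ) = ((j + 1 : ℕ) : ℤ) := by omega
    rw [e0, e1, hPmm_bb j (by omega)]
  -- reflected product identity
  have hProdA : ∀ ℓ, ℓ ≤ N →
      (∏ j ∈ Finset.range ℓ, bb (N - j)) * B (N - ℓ) = B N := by
    intro ℓ hℓ
    have hrefl := Finset.prod_range_reflect (fun j => bb (N - j)) ℓ
    have h1 : (∏ j ∈ Finset.range ℓ, bb (N - j))
        = ∏ j ∈ Finset.range ℓ, bb ((N - ℓ) + j + 1) := by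
      rw [← hrefl]
      apply Finset.prod_congr rfl
      intro j hj
      simp only [Finset.mem_range] at hj
      congr 1
      omega
    have h2 : B N = B (N - ℓ) * ∏ j ∈ Finset.range ℓ, bb ((N - ℓ) + j + 1) := by
      have hsplit := Finset.prod_range_add (fun j => bb (j+1)) (N - ℓ) ℓ
      rw [show N - ℓ + ℓ = N from by omega] at hsplit
      simp only [hB]
      rw [hsplit]
    rw [h1, h2]
    ring
  -- symmetry of g
  have hg_symm : ∀ ℓ, ℓ ≤ N → g N d α 0 N ℓ = g N d α 0 N (N - ℓ) := by
    intro ℓ hℓ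
    rw [hg_eq ℓ hℓ, hg_eq (N - ℓ) (by omega)]
    have hch : (N.choose ℓ : ℝ) = (N.choose (N - ℓ) : ℝ) := by
      rw [Nat.choose_symm hℓ]
    rw [hch]
    congr 1
    have hA1 := hProdA ℓ hℓ
    have hA2 := hProdA (N - ℓ) (by omega)
    rw [show N - (N - ℓ) = ℓ from by omega] at hA2
    rw [div_eq_div_iff (ne_of_gt (hBpos ℓ hℓ)) (ne_of_gt (hBpos (N - ℓ) (by omega)))]
    rw [hA1, ← hA2]
  -- nonnegativity of g
  have hg_nonneg : ∀ ℓ, ℓ ≤ N → 0 ≤ g N d α 0 N ℓ := by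
    intro ℓ hℓ
    unfold g
    apply mul_nonneg (by positivity)
    apply Finset.prod_nonneg
    intro j hj
    simp only [Finset.mem_range] at hj
    apply div_nonneg
    · have := Pmm_le_one N d hN hα ((0 + j : ℕ) : ℤ)
      linarith
    · have := hPpp (0 + j + 1) (by omega) (by omega)
      linarith
  -- total sum equals 1 + Z
  have hg0 : g N d α 0 N 0 = 1 := by
    unfold g
    simp
  have hT : ∑ ℓ ∈ Finset.range (N + 1), g N d α 0 N ℓ = 1 + Zc N d α 0 N := by
    have hZ : Zc N d α 0 N = ∑ i ∈ Finset.range N, g N d α 0 N (1 + i) := by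
      unfold Zc
      rw [← Finset.Ico_add_one_right_eq_Icc, Finset.sum_Ico_eq_sum_range]
      simp
    rw [Finset.sum_range_succ' (g N d α 0 N) N, hg0, hZ, add_comm]
    congr 1
    apply Finset.sum_congr rfl
    intro i _
    rw [Nat.add_comm]
  have hZpos : 0 < 1 + Zc N d α 0 N := by
    have : 0 ≤ Zc N d α 0 N := by
      unfold Zc
      apply Finset.sum_nonneg
      intro ℓ hℓ
      simp only [Finset.mem_Icc] at hℓ
      exact hg_nonneg ℓ hℓ.2
    linarith
  -- reflection of the weighted sum
  have hS : ∑ ℓ ∈ Finset.range (N + 1), (ℓ:ℝ) * g N d α 0 N ℓ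
      = ((N:ℝ)/2) * ∑ ℓ ∈ Finset.range (N + 1), g N d α 0 N ℓ := by
    have hrefl := Finset.sum_range_reflect
      (fun ℓ => ((ℓ:ℝ)) * g N d α 0 N ℓ) (N+1)
    have h1 : ∑ ℓ ∈ Finset.range (N + 1), ((N:ℝ) - ℓ) * g N d α 0 N ℓ
        = ∑ ℓ ∈ Finset.range (N + 1), (ℓ:ℝ) * g N d α 0 N ℓ := by
      rw [← hrefl]
      apply Finset.sum_congr rfl
      intro ℓ hℓ
      simp only [Finset.mem_range] at hℓ
      have hℓN : ℓ ≤ N := by omega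
      rw [show N + 1 - 1 - ℓ = N - ℓ from by omega]
      rw [← hg_symm ℓ hℓN]
      congr 1
      push_cast [Nat.cast_sub hℓN]
      ring
    have h2 : ∑ ℓ ∈ Finset.range (N + 1), ((N:ℝ) - ℓ) * g N d α 0 N ℓ
        = (N:ℝ) * (∑ ℓ ∈ Finset.range (N + 1), g N d α 0 N ℓ)
          - ∑ ℓ ∈ Finset.range (N + 1), (ℓ:ℝ) * g N d α 0 N ℓ := by
      rw [Finset.mul_sum, ← Finset.sum_sub_distrib]
      apply Finset.sum_congr rfl
      intro ℓ _
      ring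
    rw [h2] at h1
    linarith
  -- finish
  unfold pii
  have hstep : ∀ ℓ ∈ Finset.range (N+1), (ℓ:ℝ) * (g N d α 0 N ℓ / (1 + Zc N d α 0 N))
      = ((ℓ:ℝ) * g N d α 0 N ℓ) / (1 + Zc N d α 0 N) := by
    intro ℓ _
    rw [mul_div_assoc]
  rw [Finset.sum_congr rfl hstep, ← Finset.sum_div, hS, hT]
  field_simp
end

section
/- (Proposition 2, second moment of the price-increment variable.) Suppose k_+ = k_− = 0. Then the stationary flip probability, i.e. the asymptotic second moment of X = |ΔN^+| ∈ {0,1}, satisfies Σ_{i=0}^{N} π(i)·[ (i/N)·(1 − P_++(i)) + ((N−i)/N)·(1 − P_−−(i)) ] = 1 − (2/N)·Σ_{i=0}^{N} i·π(i)·P_++(i). -/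
open Finset

lemma sum_Icc_reflect (f : ℤ → ℝ) (a b c : ℤ) :
    ∑ j ∈ Finset.Icc a b, f (c - j) = ∑ j ∈ Finset.Icc (c - b) (c - a), f j := by
  apply Finset.sum_bij' (fun j _ => c - j) (fun j _ => c - j)
  · intro x hx; simp only [Finset.mem_Icc] at *; omega
  · intro x hx; simp only [Finset.mem_Icc] at *; omega
  · intro x hx; omega
  · intro x hx; omega
  · intro x hx; rfl

lemma pmm_symm (N d : ℕ) (hN : 0 < N) (α : ℝ) (i : ℤ) :
    Pmm N d α ((N : ℤ) - i) = Ppp N d α i := by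
  have hN0 : (N : ℝ) ≠ 0 := Nat.cast_ne_zero.mpr hN.ne'
  have hcc : cc N α ((N : ℤ) - i) = cc N α i := by
    unfold cc
    rw [show (((N : ℤ) - i : ℤ) : ℝ) / (N : ℝ) - 1 / 2 = -((i : ℝ) / (N : ℝ) - 1 / 2) by
      push_cast; field_simp; ring, abs_neg]
  have hsum : ∑ j ∈ Finset.Icc (max 0 (((N : ℤ) - i) + 2 * (d : ℤ) - (N : ℤ)))
        (min ((d : ℤ) - cc N α ((N : ℤ) - i)) ((N : ℤ) - i)), fminus N d ((N : ℤ) - i) j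
      = ∑ j ∈ Finset.Icc (max ((d : ℤ) + cc N α i) (i + 2 * (d : ℤ) - (N : ℤ)))
        (min (2 * (d : ℤ)) i), fplus N d i j := by
    rw [hcc]
    have key : ∀ j : ℤ, fplus N d i j = fminus N d ((N : ℤ) - i) (2 * (d : ℤ) - j) := by
      intro j
      unfold fplus fminus
      rw [show (N : ℤ) - ((N : ℤ) - i) - 1 = i - 1 by ring,
        show 2 * (d : ℤ) - (2 * (d : ℤ) - j) = j by ring]
      ring
    have hIcc : Finset.Icc (max 0 (((N : ℤ) - i) + 2 * (d : ℤ) - (N : ℤ)))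
          (min ((d : ℤ) - cc N α i) ((N : ℤ) - i))
        = Finset.Icc (2 * (d : ℤ) - min (2 * (d : ℤ)) i)
          (2 * (d : ℤ) - max ((d : ℤ) + cc N α i) (i + 2 * (d : ℤ) - (N : ℤ))) := by
      rw [show max 0 (((N : ℤ) - i) + 2 * (d : ℤ) - (N : ℤ))
            = 2 * (d : ℤ) - min (2 * (d : ℤ)) i by omega,
        show min ((d : ℤ) - cc N α i) ((N : ℤ) - i)
            = 2 * (d : ℤ) - max ((d : ℤ) + cc N α i) (i + 2 * (d : ℤ) - (N : ℤ)) by omega]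
    rw [hIcc, ← sum_Icc_reflect (fun j => fminus N d ((N : ℤ) - i) j)]
    exact Finset.sum_congr rfl fun j _ => (key j).symm
  have hcond : ((N : ℝ) * (1 / 2 - (d : ℝ) / α) ≤ (((N : ℤ) - i : ℤ) : ℝ) ∧
      (((N : ℤ) - i : ℤ) : ℝ) ≤ (N : ℝ) * (1 / 2 + (d : ℝ) / α)) ↔
      ((N : ℝ) * (1 / 2 - (d : ℝ) / α) ≤ (i : ℝ) ∧ (i : ℝ) ≤ (N : ℝ) * (1 / 2 + (d : ℝ) / α)) := by
    push_cast
    have h : (N : ℝ) * (1 / 2 - (d : ℝ) / α) + (N : ℝ) * (1 / 2 + (d : ℝ) / α) = N := by ring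
    constructor <;> rintro ⟨h1, h2⟩ <;> constructor <;> linarith
  unfold Pmm Ppp
  exact if_congr hcond hsum rfl

section Aux
variable (N d : ℕ) (α : ℝ)
variable (hd : 1 ≤ d) (hN : 2 * d < N)
variable (hPpp : ∀ i : ℕ, 1 ≤ i → i ≤ N → Ppp N d α (i : ℤ) < 1)


include hd hN hPpp

lemma hPmm_lt : ∀ j : ℕ, j < N → Pmm N d α (j : ℤ) < 1 := by
  intro j hj
  have h := pmm_symm N d (by omega) α (j : ℤ)
  have h2 : Pmm N d α (j : ℤ) = Ppp N d α (((N - j : ℕ) : ℕ) : ℤ) := by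
    rw [← pmm_symm N d (by omega) α ((N - j : ℕ) : ℤ)]
    congr 1
    omega
  rw [h2]
  exact hPpp (N - j) (by omega) (by omega)

lemma factor_pos : ∀ j : ℕ, j < N →
    0 < (1 - Pmm N d α ((0 + j : ℕ) : ℤ)) / (1 - Ppp N d α ((0 + j + 1 : ℕ) : ℤ)) := by
  intro j hj
  apply div_pos
  · have := hPmm_lt N d α hd hN hPpp j hj
    simp only [Nat.zero_add]
    linarith
  · have := hPpp (j + 1) (by omega) (by omega)
    simp only [Nat.zero_add]
    linarith

lemma g_pos : ∀ ℓ : ℕ, ℓ ≤ N → 0 < g N d α 0 N ℓ := by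
  intro ℓ hℓ
  apply mul_pos
  · exact_mod_cast Nat.choose_pos hℓ
  · exact Finset.prod_pos fun j hj => factor_pos N d α hd hN hPpp j (by
      simp only [Finset.mem_range] at hj; omega)

lemma g_balance : ∀ ℓ : ℕ, ℓ < N →
    g N d α 0 N (ℓ + 1) * ((ℓ : ℝ) + 1) * (1 - Ppp N d α ((ℓ + 1 : ℕ) : ℤ))
      = g N d α 0 N ℓ * ((N : ℝ) - ℓ) * (1 - Pmm N d α (ℓ : ℤ)) := by
  intro ℓ hℓ
  unfold g
  rw [Finset.prod_range_succ]
  have hch : ((N.choose (ℓ + 1) : ℕ) : ℝ) * ((ℓ : ℝ) + 1)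
      = ((N.choose ℓ : ℕ) : ℝ) * ((N : ℝ) - ℓ) := by
    have h0 := congrArg (Nat.cast (R := ℝ)) (Nat.choose_succ_right_eq N ℓ)
    push_cast [Nat.cast_sub hℓ.le] at h0
    linarith
  have hne : (1 - Ppp N d α ((ℓ + 1 : ℕ) : ℤ)) ≠ 0 := by
    have := hPpp (ℓ + 1) (by omega) (by omega)
    intro h; linarith [this]
  simp only [Nat.zero_add]
  have hq : (1 - Pmm N d α ((ℓ : ℕ) : ℤ)) / (1 - Ppp N d α ((ℓ + 1 : ℕ) : ℤ))
      * (1 - Ppp N d α ((ℓ + 1 : ℕ) : ℤ)) = 1 - Pmm N d α ((ℓ : ℕ) : ℤ) :=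
    div_mul_cancel₀ _ hne
  set P := ∏ j ∈ Finset.range ℓ,
    (1 - Pmm N d α ((j : ℕ) : ℤ)) / (1 - Ppp N d α ((j + 1 : ℕ) : ℤ)) with hP
  linear_combination ((N.choose (ℓ + 1) : ℝ) * ((ℓ : ℝ) + 1) * P) * hq
    + (P * (1 - Pmm N d α ((ℓ : ℕ) : ℤ))) * hch

lemma pmm_eq_ppp (j : ℕ) (hj : j ≤ N) :
    Pmm N d α (j : ℤ) = Ppp N d α (((N - j : ℕ) : ℕ) : ℤ) := by
  rw [← pmm_symm N d (by omega) α ((N - j : ℕ) : ℤ)]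
  congr 1
  omega

lemma g_top : g N d α 0 N N = 1 := by
  unfold g
  rw [Nat.choose_self, Finset.prod_div_distrib]
  have hden : ∏ j ∈ Finset.range N, (1 - Ppp N d α ((0 + j + 1 : ℕ) : ℤ))
      = ∏ j ∈ Finset.range N, (1 - Pmm N d α ((0 + j : ℕ) : ℤ)) := by
    rw [← Finset.prod_range_reflect (fun j => (1 - Ppp N d α ((0 + j + 1 : ℕ) : ℤ))) N]
    apply Finset.prod_congr rfl
    intro j hj
    simp only [Finset.mem_range] at hj
    simp only [Nat.zero_add]
    rw [pmm_eq_ppp N d α hd hN hPpp j (by omega)]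
    congr 2
    omega
  rw [hden]
  have hne : ∏ j ∈ Finset.range N, (1 - Pmm N d α ((0 + j : ℕ) : ℤ)) ≠ 0 := by
    apply Finset.prod_ne_zero_iff.mpr
    intro j hj
    simp only [Finset.mem_range] at hj
    have := hPmm_lt N d α hd hN hPpp j hj
    simp only [Nat.zero_add]
    intro h; linarith
  rw [div_self hne, Nat.cast_one, one_mul]

lemma g_symm : ∀ ℓ : ℕ, ℓ ≤ N → g N d α 0 N (N - ℓ) = g N d α 0 N ℓ := by
  intro ℓ
  induction ℓ with
  | zero =>
      intro _
      simp only [Nat.sub_zero]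
      rw [g_top N d α hd hN hPpp]
      unfold g
      simp
  | succ ℓ ih =>
      intro hℓ
      have hih := ih (by omega)
      -- balance at m := N - ℓ - 1
      have hm : N - ℓ - 1 + 1 = N - ℓ := by omega
      have hb1 := g_balance N d α hd hN hPpp (N - ℓ - 1) (by omega)
      have hb2 := g_balance N d α hd hN hPpp ℓ (by omega)
      rw [hm] at hb1
      -- rewrite casts in hb1
      have hPsym : Ppp N d α ((N - ℓ : ℕ) : ℤ) = Pmm N d α (ℓ : ℤ) :=
        (pmm_eq_ppp N d α hd hN hPpp ℓ (by omega)).symm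
      have hPsym2 : Pmm N d α ((N - ℓ - 1 : ℕ) : ℤ) = Ppp N d α ((ℓ + 1 : ℕ) : ℤ) := by
        rw [pmm_eq_ppp N d α hd hN hPpp (N - ℓ - 1) (by omega)]
        congr 2
        omega
      rw [hPsym, hPsym2, hih] at hb1
      -- hb1 : g ℓ * (↑(N-ℓ-1)+1) * (1 - Pmm ℓ) = g (N-ℓ-1) * (↑N - ↑(N-ℓ-1)) * (1 - Ppp (ℓ+1))
      have hNl1 : ((N - ℓ - 1 : ℕ) : ℝ) = (N : ℝ) - ℓ - 1 := by
        rw [show (N - ℓ - 1 : ℕ) = N - (ℓ + 1) by omega,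
          Nat.cast_sub (show ℓ + 1 ≤ N by omega)]
        push_cast; ring
      rw [hNl1] at hb1
      -- combine with hb2
      have hne : (1 - Ppp N d α ((ℓ + 1 : ℕ) : ℤ)) ≠ 0 := by
        have := hPpp (ℓ + 1) (by omega) (by omega)
        intro h; linarith
      have hl1 : ((ℓ : ℝ) + 1) ≠ 0 := by positivity
      have key : g N d α 0 N (N - (ℓ + 1)) * (((ℓ : ℝ) + 1) * (1 - Ppp N d α ((ℓ + 1 : ℕ) : ℤ)))
          = g N d α 0 N (ℓ + 1) * (((ℓ : ℝ) + 1) * (1 - Ppp N d α ((ℓ + 1 : ℕ) : ℤ))) := by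
        have h1 : (N - (ℓ + 1) : ℕ) = N - ℓ - 1 := by omega
        rw [h1]
        nlinarith [hb1, hb2]
      have hprod : (((ℓ : ℝ) + 1) * (1 - Ppp N d α ((ℓ + 1 : ℕ) : ℤ))) ≠ 0 :=
        mul_ne_zero hl1 hne
      exact mul_right_cancel₀ hprod key

end Aux


/-- Proposition 2, second moment of the price-increment variable `X = |ΔN⁺| ∈ {0,1}`
(for `k₊ = k₋ = 0`): the stationary flip probability satisfies
`Σ_{i=0}^{N} π(i)·[(i/N)(1 − P₊₊(i)) + ((N−i)/N)(1 − P₋₋(i))] = 1 − (2/N)·Σ_{i=0}^{N} i·π(i)·P₊₊(i)`. -/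
theorem stmt11 (N d : ℕ) (hd : 1 ≤ d) (hN : 2 * d < N) (α : ℝ) (hα : 0 < α)
    (hPpp : ∀ i : ℕ, 1 ≤ i → i ≤ N → Ppp N d α (i : ℤ) < 1) :
    ∑ i ∈ Finset.range (N + 1), pii N d α 0 N i *
        (((i : ℝ) / (N : ℝ)) * (1 - Ppp N d α (i : ℤ)) +
          (((N : ℝ) - (i : ℝ)) / (N : ℝ)) * (1 - Pmm N d α (i : ℤ))) =
      1 - (2 / (N : ℝ)) *
        ∑ i ∈ Finset.range (N + 1), (i : ℝ) * pii N d α 0 N i * Ppp N d α (i : ℤ) := by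
  have hNne : (N : ℝ) ≠ 0 := Nat.cast_ne_zero.mpr (by omega)
  set G : ℕ → ℝ := fun i => g N d α 0 N i with hG
  -- total mass
  have hT : ∑ i ∈ Finset.range (N + 1), G i = 1 + Zc N d α 0 N := by
    rw [Finset.sum_range_succ']
    have h0 : G 0 = 1 := by simp [hG, g]
    have h1 : Zc N d α 0 N = ∑ i ∈ Finset.range N, G (i + 1) := by
      unfold Zc
      rw [show Finset.Icc 1 N = Finset.Ico 1 (N + 1) by rw [Finset.Ico_add_one_right_eq_Icc],
        Finset.sum_Ico_eq_sum_range]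
      simp only [Nat.add_sub_cancel]
      apply Finset.sum_congr rfl
      intro i _
      congr 1
      omega
    rw [h0, h1]; ring
  -- positivity of total mass
  have hTpos : 0 < ∑ i ∈ Finset.range (N + 1), G i := by
    apply Finset.sum_pos
    · intro i hi
      exact g_pos N d α hd hN hPpp i (by simp only [Finset.mem_range] at hi; omega)
    · exact ⟨0, Finset.mem_range.mpr (by omega)⟩
  have hTne : (1 + Zc N d α 0 N) ≠ 0 := by rw [← hT]; exact hTpos.ne'
  -- detailed balance sum
  have hbal : ∑ i ∈ Finset.range (N + 1), ((N : ℝ) - i) * G i * (1 - Pmm N d α (i : ℤ))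
      = ∑ i ∈ Finset.range (N + 1), (i : ℝ) * G i * (1 - Ppp N d α (i : ℤ)) := by
    rw [Finset.sum_range_succ, Finset.sum_range_succ']
    simp only [Nat.cast_zero, zero_mul, sub_self, add_zero]
    apply Finset.sum_congr rfl
    intro ℓ hℓ
    simp only [Finset.mem_range] at hℓ
    have hb := g_balance N d α hd hN hPpp ℓ hℓ
    simp only [hG]
    push_cast at hb ⊢
    linarith [hb]
  -- symmetry: mean
  have hmean : 2 * ∑ i ∈ Finset.range (N + 1), (i : ℝ) * G i
      = (N : ℝ) * ∑ i ∈ Finset.range (N + 1), G i := by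
    have hrefl := Finset.sum_range_reflect (fun i => (i : ℝ) * G i) (N + 1)
    have hstep : ∑ i ∈ Finset.range (N + 1), (((N + 1 - 1 - i : ℕ) : ℝ) * G (N + 1 - 1 - i))
        = ∑ i ∈ Finset.range (N + 1), ((N : ℝ) - i) * G i := by
      apply Finset.sum_congr rfl
      intro i hi
      simp only [Finset.mem_range] at hi
      have h1 : N + 1 - 1 - i = N - i := by omega
      rw [h1, Nat.cast_sub (by omega : i ≤ N)]
      show ((N : ℝ) - i) * g N d α 0 N (N - i) = ((N : ℝ) - i) * g N d α 0 N i
      rw [g_symm N d α hd hN hPpp i (by omega)]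
    rw [hstep] at hrefl
    have : ∑ i ∈ Finset.range (N + 1), ((N : ℝ) - i) * G i
        + ∑ i ∈ Finset.range (N + 1), (i : ℝ) * G i
        = (N : ℝ) * ∑ i ∈ Finset.range (N + 1), G i := by
      rw [← Finset.sum_add_distrib, Finset.mul_sum]
      apply Finset.sum_congr rfl
      intro i _; ring
    linarith [hrefl, this]
  -- rewrite pii and push divisions out
  simp only [pii]
  have hL : ∑ i ∈ Finset.range (N + 1), G i / (1 + Zc N d α 0 N) *
        (((i : ℝ) / (N : ℝ)) * (1 - Ppp N d α (i : ℤ)) +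
          (((N : ℝ) - (i : ℝ)) / (N : ℝ)) * (1 - Pmm N d α (i : ℤ)))
      = ((∑ i ∈ Finset.range (N + 1), (i : ℝ) * G i * (1 - Ppp N d α (i : ℤ)))
        + ∑ i ∈ Finset.range (N + 1), ((N : ℝ) - i) * G i * (1 - Pmm N d α (i : ℤ)))
        / ((N : ℝ) * (1 + Zc N d α 0 N)) := by
    rw [← Finset.sum_add_distrib, Finset.sum_div]
    apply Finset.sum_congr rfl
    intro i _
    field_simp
  have hR : ∑ i ∈ Finset.range (N + 1),
        (i : ℝ) * (G i / (1 + Zc N d α 0 N)) * Ppp N d α (i : ℤ)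
      = (∑ i ∈ Finset.range (N + 1), (i : ℝ) * G i * Ppp N d α (i : ℤ))
        / (1 + Zc N d α 0 N) := by
    rw [Finset.sum_div]
    apply Finset.sum_congr rfl
    intro i _
    ring
  rw [hL, hR, hbal]
  have hA : ∑ i ∈ Finset.range (N + 1), (i : ℝ) * G i * (1 - Ppp N d α (i : ℤ))
      = (∑ i ∈ Finset.range (N + 1), (i : ℝ) * G i)
        - ∑ i ∈ Finset.range (N + 1), (i : ℝ) * G i * Ppp N d α (i : ℤ) := by
    rw [← Finset.sum_sub_distrib]
    apply Finset.sum_congr rfl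
    intro i _; ring
  rw [hA, ← hT]
  set T := ∑ i ∈ Finset.range (N + 1), G i with hTdef
  set M := ∑ i ∈ Finset.range (N + 1), (i : ℝ) * G i with hM
  set S := ∑ i ∈ Finset.range (N + 1), (i : ℝ) * G i * Ppp N d α (i : ℤ) with hS
  have hTne' : T ≠ 0 := hTpos.ne'
  field_simp
  ring_nf
  ring_nf at hmean
  nlinarith [hmean]
end
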